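/- For every nontrivial subgroup H of the alternating group A₅ with |H| ≠ 2, all maximal chains of H in A₅ have the same length. -/

import Mathlib

/-- A maximal chain of `H` in the ambient group of length `r`: a chain
`H = c 0 < c 1 < ... < c r = ⊤` where each `c i` is a maximal subgroup of `c (i+1)`,
i.e. each step is a covering relation in the subgroup lattice. -/
def IsMaxChainOf {G : Type*} [Group G] (H : Subgroup G) (r : ℕ) (c : ℕ → Subgroup G) : Prop :=
  c 0 = H ∧ c r = ⊤ ∧ ∀ i < r, c i ⋖ c (i + 1)

/-- All maximal chains of `H` in the ambient group have the same length. -/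
def AllMaxChainsSameLength {G : Type*} [Group G] (H : Subgroup G) : Prop :=
  ∀ (r s : ℕ) (c d : ℕ → Subgroup G),
    IsMaxChainOf H r c → IsMaxChainOf H s d → r = s

set_option maxRecDepth 1000000
open Equiv Pointwise Subgroup

abbrev A5 := alternatingGroup (Fin 5)

theorem cardA5 : Nat.card A5 = 60 := by
  have h := two_mul_card_alternatingGroup (α := Fin 5)
  rw [Fintype.card_perm] at h
  norm_num [Nat.factorial] at h
  have e : Fintype.card {x : Equiv.Perm (Fin 5) // Equiv.Perm.sign x = 1}
      = Nat.card A5 := by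
    rw [Nat.card_eq_fintype_card]
    exact Fintype.card_congr (Equiv.refl _)
  omega

theorem F1 : ∀ g : A5, g^6 = 1 → g^2 = 1 ∨ g^3 = 1 := by decide
theorem F2 : ∀ g : A5, g^4 = 1 → g^2 = 1 := by decide

/-- helper to build subgroups of A5 from a decidable predicate on perms -/
def mkSG (Pm : Perm (Fin 5) → Prop) [DecidablePred Pm]
    (h1 : Pm 1)
    (hm : ∀ a b : A5, Pm ↑a → Pm ↑b → Pm (↑a * ↑b))
    (hi : ∀ a : A5, Pm ↑a → Pm (↑a)⁻¹) : Subgroup A5 where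
  carrier := {x | Pm ↑x}
  one_mem' := h1
  mul_mem' := fun {a b} ha hb => hm a b ha hb
  inv_mem' := fun {a} ha => hi a ha

theorem card_mkSG (Pm : Perm (Fin 5) → Prop) [DecidablePred Pm] {h1 hm hi} (n : ℕ)
    (h : Fintype.card {x : A5 // Pm ↑x} = n) : Nat.card (mkSG Pm h1 hm hi) = n := by
  have : Nat.card (mkSG Pm h1 hm hi) = Nat.card {x : A5 // Pm ↑x} :=
    Nat.card_congr (Equiv.refl _)
  rw [this, Nat.card_eq_fintype_card, h]

def Pm2 (g : Perm (Fin 5)) : Prop := g 4 = 4 ∧ g ∘ g = id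
instance : DecidablePred Pm2 := fun g => by unfold Pm2; infer_instance
def Pm12 (g : Perm (Fin 5)) : Prop := g 4 = 4
instance : DecidablePred Pm12 := fun g => by unfold Pm12; infer_instance
def Pm3 (g : Perm (Fin 5)) : Prop := g 3 = 3 ∧ g 4 = 4
instance : DecidablePred Pm3 := fun g => by unfold Pm3; infer_instance
def Pm6 (g : Perm (Fin 5)) : Prop := (g 3 = 3 ∧ g 4 = 4) ∨ (g 3 = 4 ∧ g 4 = 3)
instance : DecidablePred Pm6 := fun g => by unfold Pm6; infer_instance
def Pm5 (g : Perm (Fin 5)) : Prop := ∀ i, g i = i + g 0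
instance : DecidablePred Pm5 := fun g => by unfold Pm5; infer_instance
def Pm10 (g : Perm (Fin 5)) : Prop := (∀ i, g i = i + g 0) ∨ (∀ i, g i = g 0 - i)
instance : DecidablePred Pm10 := fun g => by unfold Pm10; infer_instance

def P2 : Subgroup A5 := mkSG Pm2 (by decide) (by decide) (by decide)
def M12 : Subgroup A5 := mkSG Pm12 (by decide) (by decide) (by decide)
def P3 : Subgroup A5 := mkSG Pm3 (by decide) (by decide) (by decide)
def M6 : Subgroup A5 := mkSG Pm6 (by decide) (by decide) (by decide)
def P5 : Subgroup A5 := mkSG Pm5 (by decide) (by decide) (by decide)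
def M10 : Subgroup A5 := mkSG Pm10 (by decide) (by decide) (by decide)

theorem cardP2 : Nat.card P2 = 4 := card_mkSG _ _ (by decide)
theorem cardM12 : Nat.card M12 = 12 := card_mkSG _ _ (by decide)
theorem cardP3 : Nat.card P3 = 3 := card_mkSG _ _ (by decide)
theorem cardM6 : Nat.card M6 = 6 := card_mkSG _ _ (by decide)
theorem cardP5 : Nat.card P5 = 5 := card_mkSG _ _ (by decide)
theorem cardM10 : Nat.card M10 = 10 := card_mkSG _ _ (by decide)

theorem P2M12 : P2 ≤ M12 := fun x hx => hx.1
theorem P3M6 : P3 ≤ M6 := fun x hx => Or.inl hx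
theorem P5M10 : P5 ≤ M10 := fun x hx => Or.inl hx

-- every proper subgroup has card dividing 60 and at most 12
theorem card_dvd60 (K : Subgroup A5) : Nat.card K ∣ 60 :=
  cardA5 ▸ Subgroup.card_subgroup_dvd_card K

theorem card_le12 {K : Subgroup A5} (h : K ≠ ⊤) : Nat.card K ≤ 12 := by
  have hcore : K.normalCore = ⊥ := by
    rcases IsSimpleGroup.eq_bot_or_eq_top_of_normal K.normalCore inferInstance with h0 | h0
    · exact h0
    · exact absurd (le_trans h0.ge K.normalCore_le) (by simpa using h)
  have hker : (MulAction.toPermHom A5 (A5 ⧸ K)).ker = ⊥ := by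
    rw [← Subgroup.normalCore_eq_ker, hcore]
  have hinj : Function.Injective (MulAction.toPermHom A5 (A5 ⧸ K)) :=
    (MulAction.toPermHom A5 (A5 ⧸ K)).ker_eq_bot_iff.mp hker
  have hdvd : Nat.card A5 ∣ Nat.card (Perm (A5 ⧸ K)) :=
    Subgroup.card_dvd_of_injective _ hinj
  have hidx : Nat.card (A5 ⧸ K) = K.index := rfl
  haveI : Fintype (A5 ⧸ K) := Fintype.ofFinite _
  haveI : DecidableEq (A5 ⧸ K) := Classical.decEq _
  have hperm : Nat.card (Perm (A5 ⧸ K)) = Nat.factorial K.index := by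
    rw [Nat.card_eq_fintype_card, Fintype.card_perm, ← hidx, Nat.card_eq_fintype_card]
  rw [cardA5, hperm] at hdvd
  have hmul := Subgroup.card_mul_index K
  rw [cardA5] at hmul
  have h5 : 5 ≤ K.index := by
    by_contra hlt
    push_neg at hlt
    interval_cases h : K.index <;> simp_all [Nat.factorial] <;> omega
  have h2 : Nat.card K * 5 ≤ Nat.card K * K.index := Nat.mul_le_mul_left _ h5
  omega

-- any subgroup of card p^n, where p^n is the largest power of p dividing 60, is the
-- underlying subgroup of a Sylow p-subgroup
theorem to_sylow {p n : ℕ} [Fact p.Prime] (hpn : ∀ m : ℕ, p ^ m ∣ 60 → p ^ m ≤ p ^ n)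
    (K : Subgroup A5) (hK : Nat.card K = p ^ n) :
    ∃ S : Sylow p A5, (S : Subgroup A5) = K := by
  have hpg : IsPGroup p K := IsPGroup.of_card hK
  obtain ⟨Q, hKQ⟩ := hpg.exists_le_sylow
  obtain ⟨m, hm⟩ := Q.2.exists_card_eq
  have hdv : p ^ m ∣ 60 := hm ▸ card_dvd60 (Q : Subgroup A5)
  have hle : Nat.card (Q : Subgroup A5) ≤ Nat.card K := by
    rw [hm, hK]; exact hpn m hdv
  exact ⟨Q, (Subgroup.eq_of_le_of_card_ge hKQ hle).symm⟩

theorem exists_between5 {p n : ℕ} [Fact p.Prime]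
    (hpn : ∀ m : ℕ, p ^ m ∣ 60 → p ^ m ≤ p ^ n)
    (K : Subgroup A5) (hK : Nat.card K = p ^ n)
    (P M : Subgroup A5) (hP : Nat.card P = p ^ n) (hPM : P ≤ M)
    (hM60 : Nat.card M ≠ 60) (hMP : Nat.card M ≠ p ^ n) :
    ∃ M' : Subgroup A5, K < M' ∧ M' < ⊤ := by
  obtain ⟨SK, hSK⟩ := to_sylow hpn K hK
  obtain ⟨SP, hSP⟩ := to_sylow hpn P hP
  obtain ⟨g, hg⟩ := MulAction.exists_smul_eq A5 SP SK
  refine ⟨MulAut.conj g • M, ?_, ?_⟩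
  · have hKM' : K ≤ MulAut.conj g • M := by
      have : (MulAut.conj g • SP : Sylow p A5) = SK := Sylow.smul_def (P := SP) ▸ hg
      have hcoe : MulAut.conj g • P = K := by
        rw [← hSP, ← Sylow.pointwise_smul_def (g := MulAut.conj g) (P := SP), this, hSK]
      rw [← hcoe]
      exact Subgroup.pointwise_smul_le_pointwise_smul_iff.mpr hPM
    have hcard : Nat.card (MulAut.conj g • M : Subgroup A5) = Nat.card M :=
      (Nat.card_congr (Subgroup.equivSMul (MulAut.conj g) M).toEquiv).symm
    refine lt_of_le_of_ne hKM' (fun h => hMP ?_)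
    rw [← hcard, ← h, hK]
  · have hcard : Nat.card (MulAut.conj g • M : Subgroup A5) = Nat.card M :=
      (Nat.card_congr (Subgroup.equivSMul (MulAut.conj g) M).toEquiv).symm
    refine lt_top_iff_ne_top.mpr (fun h => hM60 ?_)
    rw [← hcard, h, Subgroup.card_top, cardA5]

section helpers
variable {G : Type*} [Group G] [Finite G] {p : ℕ} [Fact p.Prime]

theorem sylow_eq_zpowers (x : G) (h : orderOf x = p) (hG : ¬ p^2 ∣ Nat.card G) :
    ∃ S : Sylow p G, (S : Subgroup G) = zpowers x := by
  have hcz : Nat.card (zpowers x) = p := by rw [Nat.card_zpowers, h]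
  have hpg : IsPGroup p (zpowers x) := IsPGroup.of_card (by rw [hcz, pow_one])
  obtain ⟨S, hS⟩ := hpg.exists_le_sylow
  obtain ⟨m, hm⟩ := S.2.exists_card_eq
  have hd : Nat.card (zpowers x) ∣ Nat.card (S : Subgroup G) := card_dvd_of_le hS
  have hm1 : m = 1 := by
    by_contra hm1
    have h1 : 1 ≤ m := by
      rcases Nat.eq_zero_or_pos m with h0 | h0
      · rw [h0, pow_zero] at hm
        rw [hcz, hm] at hd
        exact absurd (Nat.le_of_dvd one_pos hd) (Fact.out (p := p.Prime)).one_lt.not_ge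
      · exact h0
    have h2 : 2 ≤ m := by omega
    exact hG (dvd_trans (pow_dvd_pow p h2) (hm ▸ card_subgroup_dvd_card (S : Subgroup G)))
  have : Nat.card (S : Subgroup G) ≤ Nat.card (zpowers x) := by
    rw [hcz, hm, hm1, pow_one]
  exact ⟨S, (Subgroup.eq_of_le_of_card_ge hS this).symm⟩

theorem normal_of_small_index (S : Sylow p G)
    (h : (Subgroup.normalizer ((S : Subgroup G) : Set G)).index ≤ p) : (S : Subgroup G).Normal := by
  have h1 := card_sylow_modEq_one p G
  have h2 := Sylow.card_eq_index_normalizer S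
  have hpos : (Subgroup.normalizer ((S : Subgroup G) : Set G)).index ≠ 0 := Subgroup.index_ne_zero_of_finite
  have : (Subgroup.normalizer ((S : Subgroup G) : Set G)).index = 1 := by
    rw [h2] at h1
    have hlt := (Fact.out (p := p.Prime)).one_lt
    rcases Nat.lt_or_ge ((Subgroup.normalizer ((S : Subgroup G) : Set G)).index) p with hl | hl
    · have := Nat.ModEq.eq_of_lt_of_lt h1 hl (by omega)
      omega
    · have hep : (Subgroup.normalizer ((S : Subgroup G) : Set G)).index = p := le_antisymm h hl
      rw [show (Subgroup.normalizer (S : Set G)).index = p from hep] at h1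
      have : p % p = 1 % p := h1
      rw [Nat.mod_self, Nat.one_mod_eq_one.mpr (by omega)] at this
      omega
  exact Subgroup.normalizer_eq_top_iff.mp (Subgroup.index_eq_one.mp this)

end helpers

theorem no_6_12 (K L : Subgroup A5) (hKL : K ≤ L)
    (hK : Nat.card K = 6) (hL : Nat.card L = 12) : False := by
  haveI : Fact (Nat.Prime 3) := ⟨by norm_num⟩
  haveI : Fact (Nat.Prime 2) := ⟨by norm_num⟩
  haveI : Fintype K := Fintype.ofFinite _
  -- an element of order 3
  obtain ⟨y, hy⟩ : ∃ y : K, orderOf y = 3 := by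
    apply exists_prime_orderOf_dvd_card 3
    rw [← Nat.card_eq_fintype_card, hK]; norm_num
  set x : A5 := (y : A5) with hxdef
  have hxK : x ∈ K := y.2
  have hox : orderOf x = 3 := by rw [hxdef, Subgroup.orderOf_coe, hy]
  have hx3 : x ^ 3 = 1 := by rw [← hox]; exact pow_orderOf_eq_one x
  have hx1 : x ≠ 1 := by
    intro h; rw [h, orderOf_one] at hox; omega
  -- the subgroup P = <x>
  set P : Subgroup A5 := Subgroup.zpowers x with hPdef
  -- K normalizes P
  obtain ⟨S, hS⟩ : ∃ S : Sylow 3 K, (S : Subgroup K) = Subgroup.zpowers y := by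
    apply sylow_eq_zpowers y hy
    rw [hK]; norm_num
  have hSnormal : (S : Subgroup K).Normal := by
    apply normal_of_small_index
    have hcS : Nat.card (S : Subgroup K) = 3 := by rw [hS, Nat.card_zpowers, hy]
    have hmul := Subgroup.card_mul_index (S : Subgroup K)
    rw [hcS, hK] at hmul
    have hdvd : (Subgroup.normalizer ((S : Subgroup K) : Set K)).index ∣ (S : Subgroup K).index :=
      Subgroup.index_dvd_of_le Subgroup.le_normalizer
    have hne : (Subgroup.normalizer ((S : Subgroup K) : Set K)).index ≠ 0 := Subgroup.index_ne_zero_of_finite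
    have : (Subgroup.normalizer ((S : Subgroup K) : Set K)).index ≤ (S : Subgroup K).index :=
      Nat.le_of_dvd (by omega) hdvd
    omega
  have hfwd : ∀ k, k ∈ K → ∀ w, w ∈ P → k * w * k⁻¹ ∈ P := by
    intro k hk w hw
    have hwK : w ∈ K := (Subgroup.zpowers_le.mpr hxK) hw
    obtain ⟨m, hm⟩ := Subgroup.mem_zpowers_iff.mp hw
    have hw' : (⟨w, hwK⟩ : K) ∈ (S : Subgroup K) := by
      rw [hS, Subgroup.mem_zpowers_iff]
      exact ⟨m, Subtype.ext (by push_cast; rw [← hm])⟩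
    have hconj := hSnormal.conj_mem _ hw' ⟨k, hk⟩
    rw [hS, Subgroup.mem_zpowers_iff] at hconj
    obtain ⟨n, hn⟩ := hconj
    rw [Subgroup.mem_zpowers_iff]
    refine ⟨n, ?_⟩
    have := congrArg (Subtype.val) hn
    push_cast at this
    rw [← this]
  have hKnorm : ∀ k, k ∈ K → k ∈ (Subgroup.normalizer (P : Set A5)) := by
    intro k hk
    rw [Subgroup.mem_normalizer_iff]
    intro h
    constructor
    · exact fun hh => hfwd k hk h hh
    · intro hh
      have := hfwd k⁻¹ (inv_mem hk) _ hh
      simpa [mul_assoc] using this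
  -- membership in P
  have hPel : ∀ v, v ∈ P → v = 1 ∨ v = x ∨ v = x * x := by
    intro v hv
    obtain ⟨m, hm⟩ := Subgroup.mem_zpowers_iff.mp hv
    have htriv : ∀ k : ℤ, x ^ (3 * k) = 1 := fun k => by
      rw [zpow_mul, show ((3:ℤ)) = ((3:ℕ):ℤ) by norm_num, zpow_natCast, hx3, one_zpow]
    have hsplit : x ^ m = x ^ (m % 3) := by
      conv_lhs => rw [← Int.emod_add_mul_ediv m 3]
      rw [zpow_add, htriv, mul_one]
    have h0 : 0 ≤ m % 3 := Int.emod_nonneg m (by norm_num)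
    have h3 : m % 3 < 3 := Int.emod_lt_of_pos m (by norm_num)
    interval_cases h : m % 3
    · left; rw [← hm, hsplit]; norm_num
    · right; left; rw [← hm, hsplit]; norm_num
    · right; right; rw [← hm, hsplit]
      rw [show ((2:ℤ)) = 1 + 1 by norm_num, zpow_add, zpow_one]
  -- T : the Sylow 3-subgroup of L generated by x, is normal in L
  have hxL : x ∈ L := hKL hxK
  set z : L := ⟨x, hxL⟩ with hzdef
  have hoz : orderOf z = 3 := by rw [Subgroup.orderOf_mk, hox]
  obtain ⟨T, hT⟩ : ∃ S : Sylow 3 L, (S : Subgroup L) = Subgroup.zpowers z := by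
    apply sylow_eq_zpowers z hoz
    rw [hL]; norm_num
  have hTmem : ∀ w : L, w ∈ (T : Subgroup L) ↔ (w : A5) ∈ P := by
    intro w
    rw [hT, Subgroup.mem_zpowers_iff, Subgroup.mem_zpowers_iff]
    constructor
    · rintro ⟨k, hk⟩
      exact ⟨k, by rw [← hk]; push_cast; rfl⟩
    · rintro ⟨k, hk⟩
      refine ⟨k, Subtype.ext ?_⟩
      rw [← hk]; push_cast; rfl
  have hTnormal : (T : Subgroup L).Normal := by
    apply normal_of_small_index
    -- K.subgroupOf L is contained in the normalizer
    have hKsub : K.subgroupOf L ≤ (Subgroup.normalizer ((T : Subgroup L) : Set L)) := by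
      intro l hl
      rw [Subgroup.mem_normalizer_iff]
      intro h
      rw [hTmem, hTmem]
      have := Subgroup.mem_normalizer_iff.mp (hKnorm (l : A5) hl) (h : A5)
      simpa using this
    have hc6 : Nat.card (K.subgroupOf L) = 6 := by
      rw [← hK]
      exact Nat.card_congr (Subgroup.subgroupOfEquivOfLe hKL).toEquiv
    have hd : (6 : ℕ) ∣ Nat.card ((Subgroup.normalizer ((T : Subgroup L) : Set L))) :=
      hc6 ▸ card_dvd_of_le hKsub
    have hmul := Subgroup.card_mul_index ((Subgroup.normalizer ((T : Subgroup L) : Set L)))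
    rw [hL] at hmul
    haveI : Nonempty ((Subgroup.normalizer ((T : Subgroup L) : Set L))) := ⟨1⟩
    have h6 : 6 ≤ Nat.card ((Subgroup.normalizer ((T : Subgroup L) : Set L))) :=
      Nat.le_of_dvd Nat.card_pos hd
    have hfin : (Subgroup.normalizer ((T : Subgroup L) : Set L)).index * 6 ≤ 12 := by
      calc (Subgroup.normalizer ((T : Subgroup L) : Set L)).index * 6
          ≤ (Subgroup.normalizer ((T : Subgroup L) : Set L)).index * Nat.card ((Subgroup.normalizer ((T : Subgroup L) : Set L))) :=
            Nat.mul_le_mul_left _ h6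
        _ = 12 := by rw [mul_comm]; exact hmul
    omega
  -- now pick a Sylow 2-subgroup of L, transported into A5
  obtain ⟨Q⟩ : Nonempty (Sylow 2 L) := inferInstance
  have hQ4 : Nat.card (Q : Subgroup L) = 4 := by
    obtain ⟨m, hm⟩ := Q.2.exists_card_eq
    have hmul := Subgroup.card_mul_index (Q : Subgroup L)
    rw [hL, hm] at hmul
    have hnd : ¬ (2 ∣ (Q : Subgroup L).index) := Q.not_dvd_index
    have hm2 : m ≤ 2 := by
      by_contra hgt
      push_neg at hgt
      have : (2:ℕ)^3 ∣ 2^m := pow_dvd_pow 2 hgt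
      have : (8:ℕ) ∣ 12 := by
        have hdvd : (2:ℕ)^m ∣ 12 := ⟨(Q : Subgroup L).index, hmul.symm⟩
        calc (8:ℕ) = 2^3 := by norm_num
        _ ∣ 2^m := pow_dvd_pow 2 hgt
        _ ∣ 12 := hdvd
      omega
    interval_cases m
    · simp at hmul; omega
    · rw [pow_one] at hmul
      exfalso; exact hnd ⟨3, by omega⟩
    · rw [hm]; norm_num
  set Q0 : Subgroup A5 := (Q : Subgroup L).map L.subtype with hQ0def
  have hQ0card : Nat.card Q0 = 4 := by
    rw [← hQ4]
    exact (Nat.card_congr (Subgroup.equivMapOfInjective _ _ L.subtype_injective).toEquiv).symm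
  -- every element of Q0 squares to 1
  have hQ0sq : ∀ w, w ∈ Q0 → w ^ 2 = 1 := by
    intro w hw
    apply F2
    have h4 : (⟨w, hw⟩ : Q0) ^ 4 = 1 := by
      have := pow_card_eq_one' (G := Q0) (x := ⟨w, hw⟩)
      rwa [hQ0card] at this
    have := congrArg (Subtype.val) h4
    push_cast at this
    exact this
  -- conjugation by elements of Q0 preserves P
  have hQ0conj : ∀ w, w ∈ Q0 → w * x * w⁻¹ ∈ P := by
    intro w hw
    obtain ⟨u, hu, huw⟩ := Subgroup.mem_map.mp hw
    have hzT : z ∈ (T : Subgroup L) := by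
      rw [hT]; exact Subgroup.mem_zpowers z
    have := hTnormal.conj_mem z hzT u
    rw [hTmem] at this
    have huw' : (u : A5) = w := huw
    have hcoe : ((u * z * u⁻¹ : L) : A5) = w * x * w⁻¹ := by
      push_cast
      rw [huw']
    rwa [hcoe] at this
  -- find s ∈ Q0, s ≠ 1, commuting with x
  obtain ⟨s, hsQ, hs1, hsx⟩ : ∃ s, s ∈ Q0 ∧ s ≠ 1 ∧ s * x * s⁻¹ = x := by
    by_contra hcon
    push_neg at hcon
    -- all nontrivial elements of Q0 invert x
    have hinv : ∀ w, w ∈ Q0 → w ≠ 1 → w * x * w⁻¹ = x * x := by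
      intro w hw hw1
      rcases hPel _ (hQ0conj w hw) with h | h | h
      · exfalso
        apply hx1
        have : x = w⁻¹ * (w * x * w⁻¹) * w := by group
        rw [this, h]; group
      · exact absurd h (hcon w hw hw1)
      · exact h
    -- Q0 has two distinct nontrivial elements
    obtain ⟨w1, hw1Q, hw1⟩ : ∃ w, w ∈ Q0 ∧ w ≠ 1 := by
      by_contra hq
      push_neg at hq
      have : Q0 ≤ ⊥ := fun w hw => by
        by_cases h1 : w = 1
        · simp [h1]
        · exact absurd h1 (not_not.mpr (hq w hw))
      have : Nat.card Q0 ≤ Nat.card (⊥ : Subgroup A5) := card_le_of_le this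
      rw [hQ0card, Subgroup.card_bot] at this
      omega
    obtain ⟨w2, hw2Q, hw2nz⟩ : ∃ w, w ∈ Q0 ∧ w ∉ Subgroup.zpowers w1 := by
      by_contra hq
      push_neg at hq
      have hle : Q0 ≤ Subgroup.zpowers w1 := fun w hw => hq w hw
      have hcz : Nat.card (Subgroup.zpowers w1) = 2 := by
        rw [Nat.card_zpowers]
        exact orderOf_eq_prime (by
          have := hQ0sq w1 hw1Q
          simpa using this) hw1
      have := card_le_of_le hle
      rw [hQ0card, hcz] at this
      omega
    have hw21 : w2 ≠ 1 := fun h => hw2nz (h ▸ Subgroup.one_mem _)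
    have hw2w1 : w2 ≠ w1 := fun h => hw2nz (h ▸ Subgroup.mem_zpowers w1)
    have h3Q : w1 * w2 ∈ Q0 := Subgroup.mul_mem _ hw1Q hw2Q
    have h31 : w1 * w2 ≠ 1 := by
      intro h
      apply hw2w1
      have hinv1 : w2 = w1⁻¹ := (inv_eq_of_mul_eq_one_right h).symm
      rw [hinv1, inv_eq_iff_mul_eq_one]
      have := hQ0sq w1 hw1Q
      rw [pow_two] at this
      rw [this]
    have hcomp : (w1 * w2) * x * (w1 * w2)⁻¹ = x := by
      have e2 := hinv w2 hw2Q hw21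
      have e1 := hinv w1 hw1Q hw1
      have : (w1 * w2) * x * (w1 * w2)⁻¹ = w1 * (w2 * x * w2⁻¹) * w1⁻¹ := by group
      rw [this, e2]
      have : w1 * (x * x) * w1⁻¹ = (w1 * x * w1⁻¹) * (w1 * x * w1⁻¹) := by group
      rw [this, e1]
      -- (x*x)*(x*x) = x since x^3 = 1
      have hx4 : (x * x) * (x * x) = x * (x*x*x) := by group
      rw [hx4, show x*x*x = x^3 by rw [pow_succ, pow_two], hx3, mul_one]
    have := hinv (w1*w2) h3Q h31
    rw [hcomp] at this
    -- x = x * x implies x = 1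
    apply hx1
    have : 1 * x = x * x := by rw [one_mul, ← this]
    exact (mul_right_cancel this).symm
  -- now s has order 2, commutes with x: s*x has order 6
  have hssq : s ^ 2 = 1 := hQ0sq s hsQ
  have hcomm : s * x = x * s := by
    have : s * x * s⁻¹ * s = x * s := by rw [hsx]
    rwa [inv_mul_cancel_right] at this
  have hCsx : Commute s x := hcomm
  have h6 : (s * x) ^ 6 = 1 := by
    rw [hCsx.mul_pow 6,
      show (6:ℕ) = 2*3 by norm_num, pow_mul, hssq, one_pow, one_mul,
      show (2*3:ℕ) = 3*2 by norm_num, pow_mul, hx3, one_pow]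
  rcases F1 (s * x) h6 with h | h
  · rw [hCsx.mul_pow 2, hssq, one_mul] at h
    apply hx1
    have : x = x^3 * (x^2)⁻¹ := by group
    rw [hx3, h] at this
    simpa using this
  · rw [hCsx.mul_pow 3, hx3, mul_one] at h
    apply hs1
    have : s = s^3 * (s^2)⁻¹ := by group
    rw [h, hssq] at this
    simpa using this

/-- rank function on subgroup orders -/
def rho (n : ℕ) : ℕ := if n ≤ 5 then 0 else if n ≤ 12 then 1 else 2

theorem not_cov_top {K : Subgroup A5} (h345 : Nat.card K = 3 ∨ Nat.card K = 4 ∨ Nat.card K = 5) :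
    ¬ (K ⋖ (⊤ : Subgroup A5)) := by
  intro hcov
  have : ∃ M' : Subgroup A5, K < M' ∧ M' < ⊤ := by
    rcases h345 with h | h | h
    · haveI : Fact (Nat.Prime 3) := ⟨by norm_num⟩
      refine exists_between5 (p := 3) (n := 1) ?_ K (by rw [h]; norm_num)
        P3 M6 (by rw [cardP3]; norm_num) P3M6 (by rw [cardM6]; norm_num)
        (by rw [cardM6]; norm_num)
      intro m hm
      rcases Nat.lt_or_ge m 2 with h2 | h2
      · exact Nat.pow_le_pow_right (by norm_num) (by omega)
      · exfalso
        have : (9:ℕ) ∣ 60 := dvd_trans (by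
          calc (9:ℕ) = 3^2 := by norm_num
          _ ∣ 3^m := pow_dvd_pow 3 h2) hm
        omega
    · haveI : Fact (Nat.Prime 2) := ⟨by norm_num⟩
      refine exists_between5 (p := 2) (n := 2) ?_ K (by rw [h]; norm_num)
        P2 M12 (by rw [cardP2]; norm_num) P2M12 (by rw [cardM12]; norm_num)
        (by rw [cardM12]; norm_num)
      intro m hm
      rcases Nat.lt_or_ge m 3 with h2 | h2
      · exact Nat.pow_le_pow_right (by norm_num) (by omega)
      · exfalso
        have : (8:ℕ) ∣ 60 := dvd_trans (by
          calc (8:ℕ) = 2^3 := by norm_num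
          _ ∣ 2^m := pow_dvd_pow 2 h2) hm
        omega
    · haveI : Fact (Nat.Prime 5) := ⟨by norm_num⟩
      refine exists_between5 (p := 5) (n := 1) ?_ K (by rw [h]; norm_num)
        P5 M10 (by rw [cardP5]; norm_num) P5M10 (by rw [cardM10]; norm_num)
        (by rw [cardM10]; norm_num)
      intro m hm
      rcases Nat.lt_or_ge m 2 with h2 | h2
      · exact Nat.pow_le_pow_right (by norm_num) (by omega)
      · exfalso
        have : (25:ℕ) ∣ 60 := dvd_trans (by
          calc (25:ℕ) = 5^2 := by norm_num
          _ ∣ 5^m := pow_dvd_pow 5 h2) hm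
        omega
  obtain ⟨M', h1, h2⟩ := this
  exact hcov.2 h1 h2

theorem step_lemma {K L : Subgroup A5} (h3 : 3 ≤ Nat.card K) (hcov : K ⋖ L) :
    3 ≤ Nat.card L ∧ rho (Nat.card L) = rho (Nat.card K) + 1 := by
  have hKtop : K ≠ ⊤ := by
    intro h
    exact not_top_lt (h ▸ hcov.1)
  have ha12 : Nat.card K ≤ 12 := card_le12 hKtop
  have had : Nat.card K ∣ 60 := card_dvd60 K
  have hab : Nat.card K ∣ Nat.card L := card_dvd_of_le hcov.1.le
  have hbd : Nat.card L ∣ 60 := card_dvd60 L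
  have hbpos : 0 < Nat.card L := Nat.card_pos
  have hanb : Nat.card K ≠ Nat.card L := by
    intro h
    exact hcov.1.ne (Subgroup.eq_of_le_of_card_ge hcov.1.le h.ge)
  have hlt : Nat.card K < Nat.card L :=
    lt_of_le_of_ne (Nat.le_of_dvd hbpos hab) hanb
  -- card of L if L = ⊤
  have htopcard : L = ⊤ → Nat.card L = 60 := fun h => by rw [h, Subgroup.card_top, cardA5]
  by_cases hLtop : L = ⊤
  · -- then K must have card 6, 10 or 12
    have hb60 : Nat.card L = 60 := htopcard hLtop
    have hK345 : ¬ (Nat.card K = 3 ∨ Nat.card K = 4 ∨ Nat.card K = 5) := by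
      intro h345
      exact not_cov_top h345 (hLtop ▸ hcov)
    -- so card K ∈ {6,10,12}
    have : Nat.card K = 6 ∨ Nat.card K = 10 ∨ Nat.card K = 12 := by
      interval_cases h : Nat.card K <;> omega
    rw [hb60]
    rcases this with h | h | h <;> rw [h] <;> simp [rho]
  · -- L proper : card L ≤ 12
    have hb12 : Nat.card L ≤ 12 := card_le12 hLtop
    -- K's card can't be 6, 10, 12
    have h6 : Nat.card K ≠ 6 := by
      intro h
      have hb : Nat.card L = 12 := by
        rw [h] at hab hlt
        interval_cases h' : Nat.card L <;> omega
      exact no_6_12 K L hcov.1.le h hb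
    have h1012 : Nat.card K ≠ 10 ∧ Nat.card K ≠ 12 := by
      constructor <;> intro h <;> rw [h] at hab hlt <;>
        exact absurd (Nat.le_of_dvd hbpos hab) (by omega)
    have hK345 : Nat.card K = 3 ∨ Nat.card K = 4 ∨ Nat.card K = 5 := by
      interval_cases h : Nat.card K <;> omega
    have ha : rho (Nat.card K) = 0 := by
      rcases hK345 with h | h | h <;> rw [h] <;> simp [rho]
    have hbv : Nat.card L = 6 ∨ Nat.card L = 10 ∨ Nat.card L = 12 := by
      rcases hK345 with h | h | h <;> rw [h] at hab hlt <;>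
        (interval_cases h' : Nat.card L <;> omega)
    have hbr : rho (Nat.card L) = 1 := by
      rcases hbv with h | h | h <;> rw [h] <;> simp [rho]
    exact ⟨by omega, by rw [ha, hbr]⟩


theorem chain_length (r : ℕ) : ∀ (H : Subgroup A5) (c : ℕ → Subgroup A5),
    IsMaxChainOf H r c → 3 ≤ Nat.card H → r + rho (Nat.card H) = 2 := by
  induction r with
  | zero =>
    intro H c hc _
    obtain ⟨h0, hr, _⟩ := hc
    rw [← h0, hr, Subgroup.card_top, cardA5]
    simp [rho]
  | succ n ih =>
    intro H c hc h3
    obtain ⟨h0, hr, hcov⟩ := hc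
    have hcov0 : H ⋖ c 1 := h0 ▸ hcov 0 (Nat.succ_pos n)
    obtain ⟨h3', hrho⟩ := step_lemma h3 hcov0
    have hchain : IsMaxChainOf (c 1) n (fun i => c (i + 1)) := by
      refine ⟨rfl, ?_, ?_⟩
      · exact hr
      · intro i hi
        exact hcov (i + 1) (by omega)
    have := ih (c 1) (fun i => c (i + 1)) hchain h3'
    omega

theorem stmt_13 (H : Subgroup (alternatingGroup (Fin 5)))
    (hne : H ≠ ⊥) (hcard : Nat.card H ≠ 2) :
    AllMaxChainsSameLength H := by
  have h3 : 3 ≤ Nat.card H := by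
    have h1 : Nat.card H ≠ 1 := by
      intro h
      exact hne (Subgroup.eq_bot_of_card_eq H h)
    have : 0 < Nat.card H := Nat.card_pos
    omega
  intro r s c d hc hd
  have h1 := chain_length r H c hc h3
  have h2 := chain_length s H d hd h3
  omega
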